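/- Let m ≥ 2 be an integer. In ℂ[x_0,x_1,x_2,y_0,y_1,y_2], the kernel of the linear map x_0·∂/∂y_0 + x_1·∂/∂y_1 restricted to V_{m−1,m−2} (mapping into V_{m,m−3}) has ℂ-dimension at least Σ_{K=0}^{m−2} C(m+1−K, 2), where C(·,·) denotes the binomial coefficient. In particular, this kernel dimension grows at least like a positive constant times m^3 as m → ∞. -/

import Mathlib

set_option maxHeartbeats 1000000
set_option synthInstance.maxHeartbeats 1000000


open MvPolynomial

/-- The space of bihomogeneous polynomials of bidegree `(a, b)` in
`ℂ[x_0,x_1,x_2,y_0,y_1,y_2]`, with `x`-variables indexed by `Sum.inl` and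
`y`-variables indexed by `Sum.inr`. -/
noncomputable def Vab (a b : ℕ) : Submodule ℂ (MvPolynomial (Fin 3 ⊕ Fin 3) ℂ) :=
  weightedHomogeneousSubmodule ℂ
    (Sum.elim (fun _ => ((1 : ℕ), (0 : ℕ))) (fun _ => ((0 : ℕ), (1 : ℕ)))) (a, b)

/-- The operator `x_0·∂/∂y_0 + x_1·∂/∂y_1` on `ℂ[x_0,x_1,x_2,y_0,y_1,y_2]`. -/
noncomputable def Tsing : Module.End ℂ (MvPolynomial (Fin 3 ⊕ Fin 3) ℂ) :=
  (LinearMap.mulLeft ℂ (X (Sum.inl 0))).comp (pderiv (Sum.inr 0)).toLinearMap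
    + (LinearMap.mulLeft ℂ (X (Sum.inl 1))).comp (pderiv (Sum.inr 1)).toLinearMap


namespace TopAux

open Finset

abbrev Idx : Type := Σ _ : ℕ, Σ _ : ℕ × ℕ, ℕ × ℕ

def iSet (m : ℕ) : Finset Idx :=
  (range (m - 1)).sigma fun K =>
    (Finset.HasAntidiagonal.antidiagonal (m - 1 - K)).sigma fun p => Finset.HasAntidiagonal.antidiagonal p.2

noncomputable def P (m : ℕ) (t : Idx) : MvPolynomial (Fin 3 ⊕ Fin 3) ℂ :=
  X (Sum.inl 0) ^ t.2.1.1 * X (Sum.inl 1) ^ t.2.2.1 * X (Sum.inl 2) ^ t.2.2.2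
    * X (Sum.inr 2) ^ (m - 2 - t.1)
    * (X (Sum.inl 0) * X (Sum.inr 1) - X (Sum.inl 1) * X (Sum.inr 0)) ^ t.1

lemma T_P (m : ℕ) (t : Idx) : Tsing (P m t) = 0 := by
  obtain ⟨K, ⟨a, s⟩, ⟨b, c⟩⟩ := t
  simp only [Tsing, P, LinearMap.add_apply, LinearMap.coe_comp, Function.comp_apply,
    Derivation.coeFn_coe, LinearMap.mulLeft_apply]
  simp only [pderiv_mul, pderiv_pow, pderiv_X_self, map_sub, map_mul,
    pderiv_X (R := ℂ) (σ := Fin 3 ⊕ Fin 3), Pi.single_apply]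
  norm_num [Fin.ext_iff, reduceCtorEq]
  simp only [reduceCtorEq, if_false, ite_false]
  ring

noncomputable abbrev wt : Fin 3 ⊕ Fin 3 → ℕ × ℕ :=
  Sum.elim (fun _ => ((1 : ℕ), (0 : ℕ))) (fun _ => ((0 : ℕ), (1 : ℕ)))

lemma wh_pow {φ : MvPolynomial (Fin 3 ⊕ Fin 3) ℂ} {n : ℕ × ℕ}
    (h : φ.IsWeightedHomogeneous wt n) (K : ℕ) :
    (φ ^ K).IsWeightedHomogeneous wt (K • n) := by
  induction K with
  | zero => simpa using isWeightedHomogeneous_one ℂ wt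
  | succ k ih => rw [pow_succ, succ_nsmul]; exact ih.mul h

lemma P_mem {m : ℕ} (hm : 2 ≤ m) {t : Idx} (ht : t ∈ iSet m) : P m t ∈ Vab (m-1) (m-2) := by
  obtain ⟨K, ⟨a, s⟩, ⟨b, c⟩⟩ := t
  simp only [iSet, Finset.mem_sigma, Finset.mem_range, Finset.HasAntidiagonal.mem_antidiagonal] at ht
  have hw0 : ((X (Sum.inl 0) * X (Sum.inr 1) - X (Sum.inl 1) * X (Sum.inr 0) :
      MvPolynomial (Fin 3 ⊕ Fin 3) ℂ)).IsWeightedHomogeneous wt (1, 1) := by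
    rw [← mem_weightedHomogeneousSubmodule ℂ]
    refine sub_mem ?_ ?_ <;>
      · rw [mem_weightedHomogeneousSubmodule]
        exact ((isWeightedHomogeneous_X ℂ wt _).mul (isWeightedHomogeneous_X ℂ wt _))
  have h1 := ((((wh_pow (isWeightedHomogeneous_X ℂ wt (Sum.inl 0)) a).mul
      (wh_pow (isWeightedHomogeneous_X ℂ wt (Sum.inl 1)) b)).mul
      (wh_pow (isWeightedHomogeneous_X ℂ wt (Sum.inl 2)) c)).mul
      (wh_pow (isWeightedHomogeneous_X ℂ wt (Sum.inr 2)) (m-2-K))).mul (wh_pow hw0 K)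
  simp only [Sum.elim_inl, Sum.elim_inr, Prod.smul_mk, smul_eq_mul, mul_one, mul_zero,
    Prod.mk_add_mk, add_zero, zero_add] at h1
  simp only [Vab, P, mem_weightedHomogeneousSubmodule]
  convert h1 using 2 <;> omega

noncomputable def phi : MvPolynomial (Fin 3 ⊕ Fin 3) ℂ →ₐ[ℂ] MvPolynomial (Fin 3 ⊕ Fin 3) ℂ :=
  aeval fun s => if s = Sum.inr 0 then 0 else X s

noncomputable def mu (m : ℕ) (t : Idx) : (Fin 3 ⊕ Fin 3) →₀ ℕ :=
  Finsupp.single (Sum.inl 0) (t.2.1.1 + t.1) + Finsupp.single (Sum.inl 1) t.2.2.1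
    + Finsupp.single (Sum.inl 2) t.2.2.2 + Finsupp.single (Sum.inr 1) t.1
    + Finsupp.single (Sum.inr 2) (m - 2 - t.1)



lemma phi_P (m : ℕ) (t : Idx) : phi (P m t) = monomial (mu m t) (1 : ℂ) := by
  obtain ⟨K, ⟨a, s⟩, ⟨b, c⟩⟩ := t
  simp only [phi, P, map_mul, map_pow, map_sub, aeval_X, mu]
  simp only [Sum.inr.injEq, reduceCtorEq, Fin.reduceEq, if_false, if_true, ite_false, ite_true,
    mul_zero, sub_zero]
  rw [mul_pow, X_pow_eq_monomial, X_pow_eq_monomial, X_pow_eq_monomial, X_pow_eq_monomial,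
    X_pow_eq_monomial, X_pow_eq_monomial]
  simp only [monomial_mul, mul_one, Finsupp.single_add]
  congr 1
  abel

lemma mu_apply (m : ℕ) (t : Idx) :
    mu m t (Sum.inl 0) = t.2.1.1 + t.1 ∧ mu m t (Sum.inl 1) = t.2.2.1 ∧
    mu m t (Sum.inl 2) = t.2.2.2 ∧ mu m t (Sum.inr 1) = t.1 := by
  refine ⟨?_, ?_, ?_, ?_⟩ <;>
    simp [mu, Finsupp.single_apply, Sum.inl.injEq, Sum.inr.injEq, reduceCtorEq, Fin.reduceEq]

lemma indep (m : ℕ) : LinearIndependent ℂ (fun t : iSet m => P m t.1) := by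
  apply LinearIndependent.of_comp phi.toLinearMap
  have he : (⇑phi.toLinearMap ∘ fun t : iSet m => P m t.1)
      = fun t : iSet m => monomial (mu m t.1) (1 : ℂ) := by
    funext t
    exact phi_P m t.1
  rw [he]
  have hinj : Function.Injective (fun t : iSet m => mu m t.1) := by
    rintro ⟨t, ht⟩ ⟨u, hu⟩ h
    simp only at h
    obtain ⟨K, ⟨a, s⟩, ⟨b, c⟩⟩ := t
    obtain ⟨K', ⟨a', s'⟩, ⟨b', c'⟩⟩ := u
    simp only [iSet, Finset.mem_sigma, Finset.mem_range, Finset.HasAntidiagonal.mem_antidiagonal] at ht hu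
    have h0 := DFunLike.congr_fun h (Sum.inl 0)
    have h1 := DFunLike.congr_fun h (Sum.inl 1)
    have h2 := DFunLike.congr_fun h (Sum.inl 2)
    have h3 := DFunLike.congr_fun h (Sum.inr 1)
    rw [(mu_apply m _).1, (mu_apply m _).1] at h0
    rw [(mu_apply m _).2.1, (mu_apply m _).2.1] at h1
    rw [(mu_apply m _).2.2.1, (mu_apply m _).2.2.1] at h2
    rw [(mu_apply m _).2.2.2, (mu_apply m _).2.2.2] at h3
    simp only at h0 h1 h2 h3
    apply Subtype.ext
    have : K = K' ∧ a = a' ∧ s = s' ∧ b = b' ∧ c = c' := by omega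
    obtain ⟨rfl, rfl, rfl, rfl, rfl⟩ := this
    rfl
  have hb := ((basisMonomials (Fin 3 ⊕ Fin 3) ℂ).linearIndependent).comp
    (fun t : iSet m => mu m t.1) hinj
  simpa [coe_basisMonomials, Function.comp_def] using hb

lemma gsum (n : ℕ) : (∑ j ∈ Finset.range (n + 1), (j + 1)) = (n + 2).choose 2 := by
  have h := Finset.sum_range_id_mul_two (n + 2)
  have h2 : (∑ j ∈ Finset.range (n + 1), (j + 1)) = ∑ j ∈ Finset.range (n + 2), j := by
    conv_rhs => rw [Finset.sum_range_succ']
    simp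
  rw [h2, Nat.choose_two_right]
  omega

lemma antsum (n : ℕ) : ∑ p ∈ Finset.HasAntidiagonal.antidiagonal n, (p.2 + 1) = (n + 2).choose 2 := by
  rw [Finset.Nat.sum_antidiagonal_eq_sum_range_succ_mk]
  rw [← Finset.sum_range_reflect (fun k => n - k + 1) (n + 1)]
  rw [Finset.sum_congr rfl (fun j hj => ?_), gsum]
  have hj' : j < n + 1 := Finset.mem_range.mp hj
  congr 1
  omega

lemma card_iSet (m : ℕ) :
    (iSet m).card = ∑ K ∈ Finset.range (m - 1), Nat.choose (m + 1 - K) 2 := by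
  rw [iSet, Finset.card_sigma]
  refine Finset.sum_congr rfl fun K hK => ?_
  rw [Finset.card_sigma]
  simp only [Nat.card_antidiagonal]
  rw [antsum (m - 1 - K)]
  congr 1
  have := Finset.mem_range.mp hK
  omega

lemma c2 (n : ℕ) : (n + 2).choose 2 * 2 = (n + 2) * (n + 1) := by
  have h := Finset.sum_range_id_mul_two (n + 2)
  have h2 : ∑ j ∈ Finset.range (n + 2), j = (n + 2).choose 2 := by
    rw [← gsum n, Finset.sum_range_succ']
    simp
  rw [← h2, h]
  have : n + 2 - 1 = n + 1 := by omega
  rw [this]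

lemma Tcube (n : ℕ) (hn : 1 ≤ n) :
    (n + 1) ^ 3 ≤ 6 * ∑ i ∈ Finset.range n, (i + 3).choose 2 := by
  induction n with
  | zero => omega
  | succ k ih =>
    rcases Nat.lt_or_ge k 1 with hk | hk
    · interval_cases k
      · decide
    · have hih := ih hk
      rw [Finset.sum_range_succ, Nat.mul_add]
      have hc : ((k + 1) + 2).choose 2 * 2 = (k + 3) * (k + 2) := by
        have := c2 (k + 1)
        convert this using 3 <;> omega
      nlinarith [hih, hc]

lemma Ssum (m : ℕ) (hm : 2 ≤ m) :
    m ^ 3 ≤ 6 * ∑ K ∈ Finset.range (m - 1), Nat.choose (m + 1 - K) 2 := by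
  have hr : ∑ K ∈ Finset.range (m - 1), Nat.choose (m + 1 - K) 2
      = ∑ i ∈ Finset.range (m - 1), (i + 3).choose 2 := by
    rw [← Finset.sum_range_reflect (fun i => (i + 3).choose 2) (m - 1)]
    refine Finset.sum_congr rfl fun j hj => ?_
    have := Finset.mem_range.mp hj
    congr 1
    omega
  rw [hr]
  have h := Tcube (m - 1) (by omega)
  have hm1 : m - 1 + 1 = m := by omega
  rwa [hm1] at h

lemma fd (a b : ℕ) : FiniteDimensional ℂ (Vab a b) := by
  have hle : Vab a b ≤ restrictTotalDegree (Fin 3 ⊕ Fin 3) ℂ (a + b) := by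
    intro p hp
    rw [mem_restrictTotalDegree]
    have hp' : p.IsWeightedHomogeneous
        (Sum.elim (fun _ => ((1 : ℕ), (0 : ℕ))) (fun _ => ((0 : ℕ), (1 : ℕ)))) (a, b) :=
      (mem_weightedHomogeneousSubmodule ℂ _ _ _).mp hp
    rw [totalDegree]
    apply Finset.sup_le
    intro d hd
    have h := hp' (mem_support_iff.mp hd)
    rw [Finsupp.weight_apply] at h
    have hfst := congrArg Prod.fst h
    have hsnd := congrArg Prod.snd h
    rw [Finsupp.sum, Prod.fst_sum] at hfst
    rw [Finsupp.sum, Prod.snd_sum] at hsnd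
    simp only at hfst hsnd
    have : (d.sum fun _ e => e)
        = (∑ x ∈ d.support, (d x • Sum.elim (fun _ => ((1 : ℕ), (0 : ℕ)))
            (fun _ => ((0 : ℕ), (1 : ℕ))) x).1)
          + (∑ x ∈ d.support, (d x • Sum.elim (fun _ => ((1 : ℕ), (0 : ℕ)))
            (fun _ => ((0 : ℕ), (1 : ℕ))) x).2) := by
      rw [Finsupp.sum, ← Finset.sum_add_distrib]
      refine Finset.sum_congr rfl fun x _ => ?_
      rcases x with x | x <;> simp
    rw [this, hfst, hsnd]
  exact Submodule.finiteDimensional_of_le hle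

end TopAux

/-- The kernel of `x_0·∂/∂y_0 + x_1·∂/∂y_1 : V_{m−1,m−2} → V_{m,m−3}` has dimension at
least `Σ_{K=0}^{m−2} C(m+1−K, 2)`, a quantity growing at least like `c·m^3`. -/
theorem Top_kernel_lower_bound :
    (∀ m : ℕ, 2 ≤ m →
      ∀ g : (Vab (m - 1) (m - 2)) →ₗ[ℂ] (Vab m (m - 3)),
        (∀ v, (g v : MvPolynomial (Fin 3 ⊕ Fin 3) ℂ)
            = Tsing (v : MvPolynomial (Fin 3 ⊕ Fin 3) ℂ)) →
        ∑ K ∈ Finset.range (m - 1), Nat.choose (m + 1 - K) 2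
          ≤ Module.finrank ℂ (LinearMap.ker g)) ∧
    ∃ c : ℝ, 0 < c ∧ ∀ m : ℕ, 2 ≤ m →
      c * (m : ℝ) ^ 3
        ≤ ((∑ K ∈ Finset.range (m - 1), Nat.choose (m + 1 - K) 2 : ℕ) : ℝ) := by
  constructor
  · intro m hm g hg
    haveI := TopAux.fd (m - 1) (m - 2)
    have hli : LinearIndependent ℂ (fun t : TopAux.iSet m =>
        (⟨TopAux.P m t.1, TopAux.P_mem hm t.2⟩ : Vab (m - 1) (m - 2))) := by
      apply LinearIndependent.of_comp (Vab (m - 1) (m - 2)).subtype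
      have h2 := TopAux.indep m
      simp only [Submodule.coe_subtype, Function.comp_def]
      exact h2
    have hspan : Submodule.span ℂ (Set.range (fun t : TopAux.iSet m =>
        (⟨TopAux.P m t.1, TopAux.P_mem hm t.2⟩ : Vab (m - 1) (m - 2)))) ≤ LinearMap.ker g := by
      rw [Submodule.span_le]
      rintro _ ⟨t, rfl⟩
      simp only [SetLike.mem_coe, LinearMap.mem_ker]
      apply Subtype.ext
      rw [hg]
      exact TopAux.T_P m t.1
    calc ∑ K ∈ Finset.range (m - 1), Nat.choose (m + 1 - K) 2
        = Fintype.card (TopAux.iSet m) := by rw [Fintype.card_coe, TopAux.card_iSet]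
      _ = Module.finrank ℂ (Submodule.span ℂ (Set.range (fun t : TopAux.iSet m =>
            (⟨TopAux.P m t.1, TopAux.P_mem hm t.2⟩ : Vab (m - 1) (m - 2))))) :=
          (finrank_span_eq_card hli).symm
      _ ≤ Module.finrank ℂ (LinearMap.ker g) := Submodule.finrank_mono hspan
  · refine ⟨1 / 6, by norm_num, fun m hm => ?_⟩
    have h := TopAux.Ssum m hm
    have h' : (m : ℝ) ^ 3
        ≤ 6 * ((∑ K ∈ Finset.range (m - 1), Nat.choose (m + 1 - K) 2 : ℕ) : ℝ) := by
      exact_mod_cast h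
    linarith
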